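/- Let W₁, W₂, T be symmetric positive definite real n×n matrices with ‖T^{-1/2} W₁ T^{-1/2}‖ ≤ 1 or ‖T^{-1/2} W₂ T^{-1/2}‖ ≤ 1. Then every eigenvalue λ of B = (W₂ - iT)^{-1} W₁ (W₁ + iT)^{-1} W₂ satisfies |λ| ≤ 1/√2. -/

import Mathlib

open scoped Matrix.Norms.L2Operator

/-- complexification of a real matrix -/
def Matrix.cplx {n : ℕ} (A : Matrix (Fin n) (Fin n) ℝ) : Matrix (Fin n) (Fin n) ℂ :=
  A.map Complex.ofReal

/-- `Ŵ = T^{-1/2} W T^{-1/2}` -/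
noncomputable def Matrix.hatW {n : ℕ} (T : Matrix (Fin n) (Fin n) ℝ) (hT : T.PosDef)
    (W : Matrix (Fin n) (Fin n) ℝ) : Matrix (Fin n) (Fin n) ℝ :=
  (hT.posSemidef.1.eigenvectorUnitary.1 *
      Matrix.diagonal ((↑) ∘ (√·) ∘ hT.posSemidef.1.eigenvalues) *
      (star hT.posSemidef.1.eigenvectorUnitary : Matrix (Fin n) (Fin n) ℝ))⁻¹ * W *
    (hT.posSemidef.1.eigenvectorUnitary.1 *
      Matrix.diagonal ((↑) ∘ (√·) ∘ hT.posSemidef.1.eigenvalues) *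
      (star hT.posSemidef.1.eigenvectorUnitary : Matrix (Fin n) (Fin n) ℝ))⁻¹

namespace StmtAux

open Matrix

variable {n : ℕ}

lemma cplx_mul (A B : Matrix (Fin n) (Fin n) ℝ) : (A * B).cplx = A.cplx * B.cplx := by
  ext i j
  simp [Matrix.cplx, Matrix.mul_apply]

lemma cplx_isHermitian {A : Matrix (Fin n) (Fin n) ℝ} (hA : A.IsHermitian) :
    A.cplx.IsHermitian := by
  have : (A.cplx)ᴴ = (Aᴴ).cplx := by
    ext i j
    simp [Matrix.cplx, Matrix.conjTranspose_apply, Complex.conj_ofReal]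
  rw [Matrix.IsHermitian, this, hA]

lemma euclid_normSq (v : EuclideanSpace ℂ (Fin n)) : ‖v‖ ^ 2 = ∑ i, ‖v i‖ ^ 2 := by
  rw [EuclideanSpace.norm_eq, Real.sq_sqrt (Finset.sum_nonneg fun i _ => by positivity)]

lemma euclid_normSq_real (v : EuclideanSpace ℝ (Fin n)) : ‖v‖ ^ 2 = ∑ i, ‖v i‖ ^ 2 := by
  rw [EuclideanSpace.norm_eq, Real.sq_sqrt (Finset.sum_nonneg fun i _ => by positivity)]

/-- core identity : `‖(A + εI)u‖² = ‖Au‖² + ‖u‖²` for Hermitian `A` and `ε = ± i`. -/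
lemma core (A : Matrix (Fin n) (Fin n) ℂ) (hA : A.IsHermitian) (ε : ℂ)
    (hε : ε = Complex.I ∨ ε = -Complex.I) (u : EuclideanSpace ℂ (Fin n)) :
    ‖Matrix.toEuclideanLin (A + ε • 1) u‖ ^ 2
      = ‖Matrix.toEuclideanLin A u‖ ^ 2 + ‖u‖ ^ 2 := by
  have hone : Matrix.toEuclideanLin (1 : Matrix (Fin n) (Fin n) ℂ) u = u := by
    simp [Matrix.toEuclideanLin_apply, Matrix.one_mulVec]
  have hmap : Matrix.toEuclideanLin (A + ε • 1) u
      = Matrix.toEuclideanLin A u + ε • u := by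
    have hlin : Matrix.toEuclideanLin (A + ε • (1 : Matrix (Fin n) (Fin n) ℂ))
        = Matrix.toEuclideanLin A + ε • Matrix.toEuclideanLin (1 : Matrix (Fin n) (Fin n) ℂ) := by
      rw [map_add, _root_.map_smul]
    rw [hlin, LinearMap.add_apply, LinearMap.smul_apply, hone]
  rw [hmap, @norm_add_sq ℂ _ _ _ _ (Matrix.toEuclideanLin A u) (ε • u)]
  have hz : (inner ℂ (Matrix.toEuclideanLin A u) u : ℂ).im = 0 := by
    have hsym := (Matrix.isHermitian_iff_isSymmetric.mp hA) u u
    have hconj : (starRingEnd ℂ) (inner ℂ (Matrix.toEuclideanLin A u) u : ℂ)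
        = (inner ℂ (Matrix.toEuclideanLin A u) u : ℂ) := by
      rw [inner_conj_symm]
      exact hsym.symm
    exact Complex.conj_eq_iff_im.mp hconj
  have h2 : RCLike.re (inner ℂ (Matrix.toEuclideanLin A u) (ε • u) : ℂ) = 0 := by
    rw [inner_smul_right, RCLike.re_to_complex, Complex.mul_re]
    rcases hε with rfl | rfl <;>
      simp only [Complex.neg_re, Complex.neg_im, Complex.I_re, Complex.I_im, hz] <;> ring
  have h3 : ‖ε • u‖ = ‖u‖ := by
    rcases hε with rfl | rfl <;> simp [norm_smul]
  rw [h2, h3]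
  ring

lemma toEuclideanLin_mul_apply (M N : Matrix (Fin n) (Fin n) ℂ) (z : EuclideanSpace ℂ (Fin n)) :
    Matrix.toEuclideanLin M (Matrix.toEuclideanLin N z) = Matrix.toEuclideanLin (M * N) z := by
  simp [Matrix.toEuclideanLin_apply, Matrix.mulVec_mulVec]

lemma isUnit_det (A : Matrix (Fin n) (Fin n) ℂ) (hA : A.IsHermitian) (ε : ℂ)
    (hε : ε = Complex.I ∨ ε = -Complex.I) : IsUnit (A + ε • 1).det := by
  rw [isUnit_iff_ne_zero]
  intro hdet
  obtain ⟨v, hv0, hv⟩ := (Matrix.exists_mulVec_eq_zero_iff).mpr hdet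
  set u : EuclideanSpace ℂ (Fin n) := (WithLp.equiv 2 (Fin n → ℂ)).symm v with hu
  have h0 : Matrix.toEuclideanLin (A + ε • 1) u = 0 := by
    rw [hu, Matrix.toEuclideanLin_apply_piLp_toLp]
    show WithLp.toLp 2 ((A + ε • 1) *ᵥ v) = 0
    rw [hv]
    simp
  have hc := core A hA ε hε u
  rw [h0] at hc
  simp only [norm_zero] at hc
  have hun : ‖u‖ = 0 := by
    nlinarith [norm_nonneg (Matrix.toEuclideanLin A u), norm_nonneg u,
      sq_nonneg (‖Matrix.toEuclideanLin A u‖)]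
  have : u = 0 := norm_eq_zero.mp hun
  apply hv0
  have := congrArg (WithLp.equiv 2 (Fin n → ℂ)) this
  simpa [hu] using this

lemma norm_factor_le (A : Matrix (Fin n) (Fin n) ℂ) (hA : A.IsHermitian) (ε : ℂ)
    (hε : ε = Complex.I ∨ ε = -Complex.I) (c : ℝ) (hc : 0 ≤ c)
    (h : ∀ u : EuclideanSpace ℂ (Fin n),
      ‖Matrix.toEuclideanLin A u‖ ^ 2
        ≤ c ^ 2 * (‖Matrix.toEuclideanLin A u‖ ^ 2 + ‖u‖ ^ 2)) :
    ‖A * (A + ε • 1)⁻¹‖ ≤ c := by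
  have hdet := isUnit_det A hA ε hε
  have hMN : (A + ε • 1) * (A + ε • 1)⁻¹ = 1 := Matrix.mul_nonsing_inv _ hdet
  rw [Matrix.l2_opNorm_def]
  refine ContinuousLinearMap.opNorm_le_bound _ hc fun z => ?_
  simp only [LinearEquiv.trans_apply, LinearMap.coe_toContinuousLinearMap']
  set u : EuclideanSpace ℂ (Fin n) := Matrix.toEuclideanLin (A + ε • 1)⁻¹ z with hu
  have hz : Matrix.toEuclideanLin (A + ε • 1) u = z := by
    rw [hu, toEuclideanLin_mul_apply, hMN]
    simp [Matrix.toEuclideanLin_apply, Matrix.one_mulVec]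
  have happ : Matrix.toEuclideanLin (A * (A + ε • 1)⁻¹) z = Matrix.toEuclideanLin A u := by
    rw [hu, toEuclideanLin_mul_apply]
  rw [happ]
  have hnz : ‖z‖ ^ 2 = ‖Matrix.toEuclideanLin A u‖ ^ 2 + ‖u‖ ^ 2 := by
    rw [← hz]; exact core A hA ε hε u
  have h2 := h u
  rw [← hnz] at h2
  refine le_of_pow_le_pow_left₀ (n := 2) (by norm_num) (by positivity) ?_
  rw [mul_pow]
  exact h2

/-- complexification does not increase the operator norm (as a vector bound). -/
lemma cplx_mulVec_norm_le (A : Matrix (Fin n) (Fin n) ℝ) (u : EuclideanSpace ℂ (Fin n)) :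
    ‖Matrix.toEuclideanLin A.cplx u‖ ≤ ‖A‖ * ‖u‖ := by
  set x : EuclideanSpace ℝ (Fin n) := (WithLp.equiv 2 (Fin n → ℝ)).symm fun i => (u i).re with hx
  set y : EuclideanSpace ℝ (Fin n) := (WithLp.equiv 2 (Fin n → ℝ)).symm fun i => (u i).im with hy
  have hre : ∀ i, ((Matrix.toEuclideanLin A.cplx u) i).re = (Matrix.toEuclideanLin A x) i := by
    intro i
    show ((A.cplx *ᵥ (WithLp.equiv 2 (Fin n → ℂ) u)) i).re = (A *ᵥ _) i
    simp [Matrix.mulVec, dotProduct, Matrix.cplx, Complex.re_sum, hx]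
  have him : ∀ i, ((Matrix.toEuclideanLin A.cplx u) i).im = (Matrix.toEuclideanLin A y) i := by
    intro i
    show ((A.cplx *ᵥ (WithLp.equiv 2 (Fin n → ℂ) u)) i).im = (A *ᵥ _) i
    simp [Matrix.mulVec, dotProduct, Matrix.cplx, Complex.im_sum, hy]
  have hsplit : ‖Matrix.toEuclideanLin A.cplx u‖ ^ 2
      = ‖Matrix.toEuclideanLin A x‖ ^ 2 + ‖Matrix.toEuclideanLin A y‖ ^ 2 := by
    rw [euclid_normSq, euclid_normSq_real, euclid_normSq_real, ← Finset.sum_add_distrib]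
    refine Finset.sum_congr rfl fun i _ => ?_
    rw [← hre i, ← him i]
    rw [Complex.sq_norm, Complex.normSq_apply]
    simp [Real.norm_eq_abs, sq_abs]
    ring
  have husplit : ‖u‖ ^ 2 = ‖x‖ ^ 2 + ‖y‖ ^ 2 := by
    rw [euclid_normSq, euclid_normSq_real, euclid_normSq_real, ← Finset.sum_add_distrib]
    refine Finset.sum_congr rfl fun i _ => ?_
    rw [Complex.sq_norm, Complex.normSq_apply]
    simp [hx, hy, Real.norm_eq_abs, sq_abs]
    ring
  have hbx : ‖Matrix.toEuclideanLin A x‖ ≤ ‖A‖ * ‖x‖ := by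
    rw [Matrix.l2_opNorm_def]
    exact ((Matrix.toEuclideanLin.trans LinearMap.toContinuousLinearMap) A).le_opNorm x
  have hby : ‖Matrix.toEuclideanLin A y‖ ≤ ‖A‖ * ‖y‖ := by
    rw [Matrix.l2_opNorm_def]
    exact ((Matrix.toEuclideanLin.trans LinearMap.toContinuousLinearMap) A).le_opNorm y
  have hnn : (0:ℝ) ≤ ‖A‖ := norm_nonneg _
  refine le_of_pow_le_pow_left₀ (n := 2) (by norm_num) (by positivity) ?_
  rw [mul_pow]
  nlinarith [norm_nonneg (Matrix.toEuclideanLin A x), norm_nonneg (Matrix.toEuclideanLin A y),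
    norm_nonneg x, norm_nonneg y]

lemma norm_one_le : ‖(1 : Matrix (Fin n) (Fin n) ℂ)‖ ≤ 1 := by
  rw [Matrix.l2_opNorm_def]
  refine ContinuousLinearMap.opNorm_le_bound _ zero_le_one fun z => ?_
  simp only [LinearEquiv.trans_apply, LinearMap.coe_toContinuousLinearMap']
  have : Matrix.toEuclideanLin (1 : Matrix (Fin n) (Fin n) ℂ) z = z := by
    simp [Matrix.toEuclideanLin_apply, Matrix.one_mulVec]
  rw [this, one_mul]

end StmtAux

/-- if `‖Ŵ₁‖ ≤ 1` or `‖Ŵ₂‖ ≤ 1`, then every eigenvalue of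
`B = (W₂ - iT)⁻¹ W₁ (W₁ + iT)⁻¹ W₂` has modulus at most `1/√2`. -/
theorem stmt_5 {n : ℕ} (W₁ W₂ T : Matrix (Fin n) (Fin n) ℝ)
    (hW₁ : W₁.PosDef) (hW₂ : W₂.PosDef) (hT : T.PosDef)
    (hsmall : ‖T.hatW hT W₁‖ ≤ 1 ∨ ‖T.hatW hT W₂‖ ≤ 1) :
    ∀ lam ∈ spectrum ℂ
        ((W₂.cplx - Complex.I • T.cplx)⁻¹ * W₁.cplx *
          (W₁.cplx + Complex.I • T.cplx)⁻¹ * W₂.cplx),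
      ‖lam‖ ≤ 1 / Real.sqrt 2 := by
  classical
  intro lam hlam
  set S := hT.posSemidef.1.eigenvectorUnitary.1 *
      Matrix.diagonal ((↑) ∘ (√·) ∘ hT.posSemidef.1.eigenvalues) *
      (star hT.posSemidef.1.eigenvectorUnitary : Matrix (Fin n) (Fin n) ℝ) with hSdef
  have hS : S * S = T := by
    have hU : (star hT.posSemidef.1.eigenvectorUnitary : Matrix (Fin n) (Fin n) ℝ) *
        hT.posSemidef.1.eigenvectorUnitary.1 = 1 :=
      Unitary.star_mul_self_of_mem hT.posSemidef.1.eigenvectorUnitary.2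
    have hD : Matrix.diagonal (((↑) ∘ (√·) ∘ hT.posSemidef.1.eigenvalues : Fin n → ℝ)) *
        Matrix.diagonal (((↑) ∘ (√·) ∘ hT.posSemidef.1.eigenvalues : Fin n → ℝ))
        = Matrix.diagonal (RCLike.ofReal ∘ hT.posSemidef.1.eigenvalues) := by
      rw [Matrix.diagonal_mul_diagonal]
      congr 1
      funext i
      simp [Real.mul_self_sqrt (hT.posSemidef.eigenvalues_nonneg i)]
    conv_rhs => rw [hT.posSemidef.1.spectral_theorem, Unitary.conjStarAlgAut_apply]
    rw [hSdef]
    calc _ = hT.posSemidef.1.eigenvectorUnitary.1 *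
          (Matrix.diagonal ((↑) ∘ (√·) ∘ hT.posSemidef.1.eigenvalues) *
          ((star hT.posSemidef.1.eigenvectorUnitary : Matrix (Fin n) (Fin n) ℝ) *
            hT.posSemidef.1.eigenvectorUnitary.1) *
          Matrix.diagonal ((↑) ∘ (√·) ∘ hT.posSemidef.1.eigenvalues)) *
          (star hT.posSemidef.1.eigenvectorUnitary : Matrix (Fin n) (Fin n) ℝ) := by
            simp only [Matrix.mul_assoc]
      _ = _ := by rw [hU, Matrix.mul_one, hD]
  have hSherm : S.IsHermitian := by
    have := Matrix.isHermitian_mul_mul_conjTranspose hT.posSemidef.1.eigenvectorUnitary.1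
      (Matrix.isHermitian_diagonal (((↑) ∘ (√·) ∘ hT.posSemidef.1.eigenvalues : Fin n → ℝ)))
    exact this
  have hSdet : IsUnit S.det := by
    have hTdet : 0 < T.det := hT.det_pos
    rw [isUnit_iff_ne_zero]
    intro h0
    rw [← hS, Matrix.det_mul, h0, mul_zero] at hTdet
    exact lt_irrefl _ hTdet
  set P := S.cplx with hPdef
  have hPdetEq : P.det = (S.det : ℂ) := (RingHom.map_det Complex.ofRealHom S).symm
  have hPdet : IsUnit P.det := by
    rw [isUnit_iff_ne_zero, hPdetEq]
    exact_mod_cast isUnit_iff_ne_zero.mp hSdet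
  have hP1 : ∀ Z : Matrix (Fin n) (Fin n) ℂ, P⁻¹ * (P * Z) = Z := fun Z => by
    rw [← Matrix.mul_assoc, Matrix.nonsing_inv_mul _ hPdet, Matrix.one_mul]
  have hP2 : ∀ Z : Matrix (Fin n) (Fin n) ℂ, P * (P⁻¹ * Z) = Z := fun Z => by
    rw [← Matrix.mul_assoc, Matrix.mul_nonsing_inv _ hPdet, Matrix.one_mul]
  set A₁ := (T.hatW hT W₁).cplx with hA₁def
  set A₂ := (T.hatW hT W₂).cplx with hA₂def
  -- factorization of W through hatW
  have hfact : ∀ W : Matrix (Fin n) (Fin n) ℝ, P * (T.hatW hT W).cplx * P = W.cplx := by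
    intro W
    have hw : S * (T.hatW hT W) * S = W := by
      show S * (S⁻¹ * W * S⁻¹) * S = W
      calc S * (S⁻¹ * W * S⁻¹) * S = S * S⁻¹ * W * (S⁻¹ * S) := by
            simp only [Matrix.mul_assoc]
        _ = W := by
            rw [Matrix.mul_nonsing_inv _ hSdet, Matrix.nonsing_inv_mul _ hSdet,
              Matrix.one_mul, Matrix.mul_one]
    rw [hPdef, ← StmtAux.cplx_mul, ← StmtAux.cplx_mul, hw]
  have hTc : T.cplx = P * P := by rw [hPdef, ← StmtAux.cplx_mul, hS]
  -- Hermitian facts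
  have hherm : ∀ W : Matrix (Fin n) (Fin n) ℝ, W.PosDef → ((T.hatW hT W).cplx).IsHermitian := by
    intro W hW
    apply StmtAux.cplx_isHermitian
    have hSinvherm : (S⁻¹).IsHermitian := hSherm.inv
    have := Matrix.isHermitian_mul_mul_conjTranspose S⁻¹ hW.1
    rw [hSinvherm] at this
    exact this
  have hherm₁ := hherm W₁ hW₁
  have hherm₂ := hherm W₂ hW₂
  set X₁ : Matrix (Fin n) (Fin n) ℂ := A₁ + Complex.I • 1 with hX₁def
  set X₂ : Matrix (Fin n) (Fin n) ℂ := A₂ + (-Complex.I) • 1 with hX₂def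
  have hU₁ : IsUnit X₁.det := StmtAux.isUnit_det A₁ hherm₁ Complex.I (Or.inl rfl)
  have hU₂ : IsUnit X₂.det := StmtAux.isUnit_det A₂ hherm₂ (-Complex.I) (Or.inr rfl)
  have hX2c : ∀ Z : Matrix (Fin n) (Fin n) ℂ, X₂⁻¹ * (X₂ * Z) = Z := fun Z => by
    rw [← Matrix.mul_assoc, Matrix.nonsing_inv_mul _ hU₂, Matrix.one_mul]
  -- the two factorizations
  have e₁ : W₁.cplx + Complex.I • T.cplx = P * X₁ * P := by
    rw [hTc, ← hfact W₁, hX₁def]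
    simp only [← hA₁def, Matrix.mul_add, Matrix.add_mul, Matrix.mul_smul, Matrix.smul_mul, Matrix.mul_one]
  have e₂ : W₂.cplx - Complex.I • T.cplx = P * X₂ * P := by
    rw [hTc, ← hfact W₂, hX₂def]
    simp only [← hA₂def, Matrix.mul_add, Matrix.add_mul, neg_smul, Matrix.mul_neg,
      Matrix.neg_mul, Matrix.mul_smul, Matrix.smul_mul, Matrix.mul_one, sub_eq_add_neg]
  set M : Matrix (Fin n) (Fin n) ℂ := (A₁ * X₁⁻¹) * (A₂ * X₂⁻¹) with hMdef
  set Q : Matrix (Fin n) (Fin n) ℂ := X₂ * P with hQdef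
  have hB : (W₂.cplx - Complex.I • T.cplx)⁻¹ * W₁.cplx * (W₁.cplx + Complex.I • T.cplx)⁻¹ *
      W₂.cplx = Q⁻¹ * M * Q := by
    rw [e₂, e₁, ← hfact W₁, ← hfact W₂, hQdef, hMdef]
    rw [Matrix.mul_inv_rev (P * X₂) P, Matrix.mul_inv_rev P X₂,
      Matrix.mul_inv_rev (P * X₁) P, Matrix.mul_inv_rev P X₁, Matrix.mul_inv_rev X₂ P]
    simp only [Matrix.mul_assoc, hP1, hP2, hX2c, ← hA₁def, ← hA₂def]
  have hQunit : IsUnit Q := by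
    apply (Matrix.isUnit_iff_isUnit_det _).mpr
    rw [hQdef, Matrix.det_mul]
    exact hU₂.mul hPdet
  have hspec : lam ∈ spectrum ℂ M := by
    rw [hB] at hlam
    have hrw : Q⁻¹ * M * Q
        = (↑(hQunit.unit⁻¹) : Matrix (Fin n) (Fin n) ℂ) * M *
          (hQunit.unit : Matrix (Fin n) (Fin n) ℂ) := by
      rw [Matrix.coe_units_inv, hQunit.unit_spec]
    rw [hrw, spectrum.units_conjugate'] at hlam
    exact hlam
  haveI : CompleteSpace (Matrix (Fin n) (Fin n) ℂ) := FiniteDimensional.complete ℂ _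
  have hlam1 : ‖lam‖ ≤ ‖M‖ * ‖(1 : Matrix (Fin n) (Fin n) ℂ)‖ :=
    spectrum.norm_le_norm_mul_of_mem hspec
  have hlam2 : ‖lam‖ ≤ ‖M‖ := by
    calc ‖lam‖ ≤ ‖M‖ * ‖(1 : Matrix (Fin n) (Fin n) ℂ)‖ := hlam1
      _ ≤ ‖M‖ * 1 := mul_le_mul_of_nonneg_left StmtAux.norm_one_le (norm_nonneg M)
      _ = ‖M‖ := mul_one _
  have hMle : ‖M‖ ≤ ‖A₁ * X₁⁻¹‖ * ‖A₂ * X₂⁻¹‖ := Matrix.l2_opNorm_mul _ _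
  -- bounds on factors
  have hsqrt2 : (1 / Real.sqrt 2) ^ 2 = 1 / 2 := by
    rw [div_pow, one_pow, Real.sq_sqrt (by norm_num : (2:ℝ) ≥ 0)]
  have hbig : ∀ (A : Matrix (Fin n) (Fin n) ℂ) (hA : A.IsHermitian) (ε : ℂ),
      (ε = Complex.I ∨ ε = -Complex.I) → ‖A * (A + ε • 1)⁻¹‖ ≤ 1 := by
    intro A hA ε hε
    refine StmtAux.norm_factor_le A hA ε hε 1 zero_le_one fun u => ?_
    nlinarith [sq_nonneg ‖u‖, sq_nonneg ‖Matrix.toEuclideanLin A u‖]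
  have hsmallbound : ∀ (W : Matrix (Fin n) (Fin n) ℝ), W.PosDef → ‖T.hatW hT W‖ ≤ 1 →
      ∀ (ε : ℂ), (ε = Complex.I ∨ ε = -Complex.I) →
      ‖(T.hatW hT W).cplx * ((T.hatW hT W).cplx + ε • 1)⁻¹‖ ≤ 1 / Real.sqrt 2 := by
    intro W hW hWn ε hε
    refine StmtAux.norm_factor_le _ (hherm W hW) ε hε (1 / Real.sqrt 2) (by positivity) fun u => ?_
    have hv : ‖Matrix.toEuclideanLin (T.hatW hT W).cplx u‖ ≤ ‖u‖ := by
      calc ‖Matrix.toEuclideanLin (T.hatW hT W).cplx u‖ ≤ ‖T.hatW hT W‖ * ‖u‖ :=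
            StmtAux.cplx_mulVec_norm_le _ u
        _ ≤ 1 * ‖u‖ := mul_le_mul_of_nonneg_right hWn (norm_nonneg u)
        _ = ‖u‖ := one_mul _
    rw [hsqrt2]
    nlinarith [hv, norm_nonneg (Matrix.toEuclideanLin (T.hatW hT W).cplx u), norm_nonneg u]
  have hfin : ‖M‖ ≤ 1 / Real.sqrt 2 := by
    rcases hsmall with hs | hs
    · have b₁ : ‖A₁ * X₁⁻¹‖ ≤ 1 / Real.sqrt 2 :=
        hsmallbound W₁ hW₁ hs Complex.I (Or.inl rfl)
      have b₂ : ‖A₂ * X₂⁻¹‖ ≤ 1 := hbig A₂ hherm₂ (-Complex.I) (Or.inr rfl)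
      calc ‖M‖ ≤ ‖A₁ * X₁⁻¹‖ * ‖A₂ * X₂⁻¹‖ := hMle
        _ ≤ (1 / Real.sqrt 2) * 1 :=
            mul_le_mul b₁ b₂ (norm_nonneg _) (by positivity)
        _ = 1 / Real.sqrt 2 := mul_one _
    · have b₁ : ‖A₁ * X₁⁻¹‖ ≤ 1 := hbig A₁ hherm₁ Complex.I (Or.inl rfl)
      have b₂ : ‖A₂ * X₂⁻¹‖ ≤ 1 / Real.sqrt 2 :=
        hsmallbound W₂ hW₂ hs (-Complex.I) (Or.inr rfl)
      calc ‖M‖ ≤ ‖A₁ * X₁⁻¹‖ * ‖A₂ * X₂⁻¹‖ := hMle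
        _ ≤ 1 * (1 / Real.sqrt 2) :=
            mul_le_mul b₁ b₂ (norm_nonneg _) zero_le_one
        _ = 1 / Real.sqrt 2 := one_mul _
  exact hlam2.trans hfin
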